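/- For all real numbers h, e with 0 ≤ h ≤ e ≤ 1 and e > 0, the rMPE value dominates the Bayesian implication value: 1 - (1 - h)(e - h) ≥ h / e. (For implications of E by H, all results of the rMPE method are at least as high as the results h/e of Bayes' theorem (6c) for the same initial values.) -/
import Mathlib


/-- The rMPE value (formula (7)) dominates the Bayesian implication value
`h / e` of formula (6c). -/
theorem rMPE_ge_bayes (h e : ℝ) (h0 : 0 ≤ h) (hhe : h ≤ e) (he1 : e ≤ 1)
    (hepos : 0 < e) :
    h / e ≤ 1 - (1 - h) * (e - h) := by
  rw [div_le_iff₀ hepos]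
  nlinarith [mul_nonneg (sub_nonneg.2 hhe) (mul_nonneg hepos.le h0)]
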